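/- Let e be a bilinear map on a cyclic group G of prime order p. With ticket T_U = (g₀ · Y · g₁^{d'} · g₂^{s_u} · g₃^{ψ_u})^{1/(x_s+ω_u)} where Y = ξ^{x_u} · g₁^{d}, pseudonym Ps_U = ξ^{x_u} · g₁^{d_u}, d_u = d + d', F = T_U · ϑ^π, and Y_S = ρ^{x_s}, assuming x_s + ω_u ≠ 0, the following holds: e(F, Y_S) / (e(g₀,ρ) · e(Ps_U,ρ) · e(g₃,ρ)^{ψ_u}) = e(g₂,ρ)^{s_u} · e(F,ρ)^{-ω_u} · e(ϑ,ρ)^{ω_u·π} · e(ϑ, Y_S)^{π}. -/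

import Mathlib

set_option linter.unusedSectionVars false

section helpers

variable {p : ℕ} [Fact p.Prime] {G : Type*} [CommGroup G]

lemma hp_pow_mod (g : G) (hg : g ^ p = 1) (n : ℕ) : g ^ (n % p) = g ^ n := by
  conv_rhs => rw [← Nat.mod_add_div n p]
  rw [pow_add, pow_mul, hg, one_pow, mul_one]

lemma valpow_add (g : G) (hg : g ^ p = 1) (a b : ZMod p) :
    g ^ (a + b).val = g ^ a.val * g ^ b.val := by
  rw [ZMod.val_add, hp_pow_mod g hg, pow_add]

lemma valpow_mul (g : G) (hg : g ^ p = 1) (a b : ZMod p) :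
    g ^ (a * b).val = (g ^ a.val) ^ b.val := by
  rw [ZMod.val_mul, hp_pow_mod g hg, pow_mul]

lemma valpow_neg (g : G) (hg : g ^ p = 1) (a : ZMod p) :
    g ^ (-a).val = (g ^ a.val)⁻¹ := by
  have h := valpow_add g hg (-a) a
  rw [neg_add_cancel] at h
  simp only [ZMod.val_zero, pow_zero] at h
  exact eq_inv_of_mul_eq_one_left h.symm

lemma zpow_val_eq (g : G) (hg : g ^ p = 1) (z : ℤ) :
    g ^ ((z : ZMod p)).val = g ^ z := by
  have h2 : (p : ℤ) ∣ z - ((z : ZMod p)).val := by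
    rw [← ZMod.intCast_zmod_eq_zero_iff_dvd]
    push_cast
    simp [ZMod.natCast_val, ZMod.cast_id]
  obtain ⟨k, hk⟩ := h2
  have hz : z = (((z : ZMod p)).val : ℤ) + p * k := by linarith
  conv_rhs => rw [hz]
  rw [zpow_add, zpow_natCast, zpow_mul, zpow_natCast, hg, one_zpow, mul_one]

end helpers

/-- Correctness (Eq. 9) of the ticket validation proof Π_U³. -/
theorem ticket_validation_proof_correctness
    (p : ℕ) [Fact (Nat.Prime p)]
    (G Gτ : Type*) [CommGroup G] [CommGroup Gτ]
    (hGcard : Nat.card G = p) (hGτcard : Nat.card Gτ = p)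
    (e : G → G → Gτ)
    (hbil : ∀ (g h : G) (a b : ZMod p),
      e (g ^ (a : ZMod p).val) (h ^ (b : ZMod p).val) = (e g h) ^ ((a * b : ZMod p)).val)
    (g₀ g₁ g₂ g₃ ξ ρ ϑ : G)
    (hg₀ : ∀ y : G, y ∈ Subgroup.zpowers g₀)
    (hg₁ : ∀ y : G, y ∈ Subgroup.zpowers g₁)
    (hg₂ : ∀ y : G, y ∈ Subgroup.zpowers g₂)
    (hg₃ : ∀ y : G, y ∈ Subgroup.zpowers g₃)
    (hξ : ∀ y : G, y ∈ Subgroup.zpowers ξ)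
    (hρ : ∀ y : G, y ∈ Subgroup.zpowers ρ)
    (hϑ : ∀ y : G, y ∈ Subgroup.zpowers ϑ)
    (x_s x_u d d' d_u s_u ψ_u ω_u π : ZMod p)
    (hxω : x_s + ω_u ≠ 0) (hdu : d_u = d + d')
    (Y Ps_U T_U F Y_S : G)
    (hY : Y = ξ ^ (x_u : ZMod p).val * g₁ ^ (d : ZMod p).val)
    (hPs : Ps_U = ξ ^ (x_u : ZMod p).val * g₁ ^ (d_u : ZMod p).val)
    (hT : T_U = (g₀ * Y * g₁ ^ (d' : ZMod p).val * g₂ ^ (s_u : ZMod p).val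
                   * g₃ ^ (ψ_u : ZMod p).val) ^ (((x_s + ω_u)⁻¹ : ZMod p)).val)
    (hF : F = T_U * ϑ ^ (π : ZMod p).val)
    (hYS : Y_S = ρ ^ (x_s : ZMod p).val) :
    e F Y_S / (e g₀ ρ * e Ps_U ρ * (e g₃ ρ) ^ (ψ_u : ZMod p).val)
      = (e g₂ ρ) ^ (s_u : ZMod p).val * (e F ρ) ^ ((-ω_u : ZMod p)).val
        * (e ϑ ρ) ^ ((ω_u * π : ZMod p)).val * (e ϑ Y_S) ^ (π : ZMod p).val := by
  have hpρ : ρ ^ p = 1 := by rw [← hGcard]; exact pow_card_eq_one'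
  set t := e ρ ρ with ht
  have hpt : t ^ p = 1 := by rw [← hGτcard]; exact pow_card_eq_one'
  have hone : ((1 : ZMod p)).val = 1 := ZMod.val_one p
  have hbρ : ∀ a b : ZMod p, e (ρ ^ a.val) (ρ ^ b.val) = t ^ (a * b).val :=
    fun a b => hbil ρ ρ a b
  have hb1 : ∀ a : ZMod p, e (ρ ^ a.val) ρ = t ^ a.val := by
    intro a
    have h := hbρ a 1
    rwa [hone, pow_one, mul_one] at h
  -- express generators as powers of ρ
  obtain ⟨z0, hz0⟩ := Subgroup.mem_zpowers_iff.1 (hρ g₀)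
  obtain ⟨z1, hz1⟩ := Subgroup.mem_zpowers_iff.1 (hρ g₁)
  obtain ⟨z2, hz2⟩ := Subgroup.mem_zpowers_iff.1 (hρ g₂)
  obtain ⟨z3, hz3⟩ := Subgroup.mem_zpowers_iff.1 (hρ g₃)
  obtain ⟨zξ, hzξ⟩ := Subgroup.mem_zpowers_iff.1 (hρ ξ)
  obtain ⟨zϑ, hzϑ⟩ := Subgroup.mem_zpowers_iff.1 (hρ ϑ)
  set a0 : ZMod p := (z0 : ZMod p) with ha0
  set a1 : ZMod p := (z1 : ZMod p) with ha1
  set a2 : ZMod p := (z2 : ZMod p) with ha2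
  set a3 : ZMod p := (z3 : ZMod p) with ha3
  set aξ : ZMod p := (zξ : ZMod p) with haξ
  set aϑ : ZMod p := (zϑ : ZMod p) with haϑ
  have h0eq : ρ ^ a0.val = g₀ := (zpow_val_eq ρ hpρ z0).trans hz0
  have h1eq : ρ ^ a1.val = g₁ := (zpow_val_eq ρ hpρ z1).trans hz1
  have h2eq : ρ ^ a2.val = g₂ := (zpow_val_eq ρ hpρ z2).trans hz2
  have h3eq : ρ ^ a3.val = g₃ := (zpow_val_eq ρ hpρ z3).trans hz3
  have hξeq : ρ ^ aξ.val = ξ := (zpow_val_eq ρ hpρ zξ).trans hzξ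
  have hϑeq : ρ ^ aϑ.val = ϑ := (zpow_val_eq ρ hpρ zϑ).trans hzϑ
  set b : ZMod p := a0 + (aξ * x_u + a1 * d) + a1 * d' + a2 * s_u + a3 * ψ_u with hb
  set f : ZMod p := b * (x_s + ω_u)⁻¹ + aϑ * π with hf
  have hYe : Y = ρ ^ ((aξ * x_u + a1 * d)).val := by
    rw [hY, ← hξeq, ← h1eq, ← valpow_mul ρ hpρ, ← valpow_mul ρ hpρ, ← valpow_add ρ hpρ]
  have hbase : g₀ * Y * g₁ ^ (d' : ZMod p).val * g₂ ^ (s_u : ZMod p).val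
      * g₃ ^ (ψ_u : ZMod p).val = ρ ^ b.val := by
    rw [hYe, ← h0eq, ← h1eq, ← h2eq, ← h3eq]
    simp only [← valpow_mul ρ hpρ, ← valpow_add ρ hpρ]
    rfl
  have hTe : T_U = ρ ^ ((b * (x_s + ω_u)⁻¹)).val := by
    rw [hT, hbase, ← valpow_mul ρ hpρ]
  have hFe : F = ρ ^ f.val := by
    rw [hF, hTe, ← hϑeq, ← valpow_mul ρ hpρ, ← valpow_add ρ hpρ]
  have hPse : Ps_U = ρ ^ ((aξ * x_u + a1 * d_u)).val := by
    rw [hPs, ← hξeq, ← h1eq, ← valpow_mul ρ hpρ, ← valpow_mul ρ hpρ, ← valpow_add ρ hpρ]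
  have heFYS : e F Y_S = t ^ ((f * x_s)).val := by rw [hFe, hYS]; exact hbρ f x_s
  have heg0 : e g₀ ρ = t ^ a0.val := by rw [← h0eq]; exact hb1 a0
  have heg2 : e g₂ ρ = t ^ a2.val := by rw [← h2eq]; exact hb1 a2
  have heg3 : e g₃ ρ = t ^ a3.val := by rw [← h3eq]; exact hb1 a3
  have hePs : e Ps_U ρ = t ^ ((aξ * x_u + a1 * d_u)).val := by rw [hPse]; exact hb1 _
  have heF : e F ρ = t ^ f.val := by rw [hFe]; exact hb1 f
  have heϑ : e ϑ ρ = t ^ aϑ.val := by rw [← hϑeq]; exact hb1 aϑ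
  have heϑY : e ϑ Y_S = t ^ ((aϑ * x_s)).val := by rw [← hϑeq, hYS]; exact hbρ aϑ x_s
  rw [heFYS, heg0, heg2, heg3, hePs, heF, heϑ, heϑY]
  simp only [← valpow_mul t hpt]
  rw [div_eq_mul_inv]
  simp only [← valpow_add t hpt]
  rw [← valpow_neg t hpt]
  simp only [← valpow_add t hpt]
  congr 1
  refine congrArg ZMod.val ?_
  subst hdu
  rw [hf, hb]
  field_simp
  ring
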